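/- Let λ, h, f : [0, T) → ℝ solve the cylinder soliton ODE system (λ > 0, λ' = −1 + λh², h' = h/λ − (3/2)h³, f' = (1/2)h²f). Then for all t ∈ [0, T): 1/2 − λ(t)h(t)² = (1/2 − λ(0)h(0)²) · exp(−2∫₀ᵗ h(s)² ds). In particular, the sign of 1/2 − λh² is preserved, and if 0 < λ(0)h(0)² < 1/2 then λ(t)h(t)² is nondecreasing and satisfies λ(0)h(0)² ≤ λ(t)h(t)² < 1/2 for all t. -/

import Mathlib

open intervalIntegral

/-- Along a solution of the cylinder soliton ODE system on `[0, T)` one has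
`1/2 - λ(t)h(t)² = (1/2 - λ(0)h(0)²) exp(-2∫₀ᵗ h²)`; in particular the sign of
`1/2 - λh²` is preserved, and if `0 < λ(0)h(0)² < 1/2` then `λh²` is nondecreasing
with `λ(0)h(0)² ≤ λ(t)h(t)² < 1/2`. -/
theorem stmt_14 (T : ℝ) (lam h f : ℝ → ℝ)
    (hpos : ∀ t ∈ Set.Ico (0 : ℝ) T, 0 < lam t)
    (hlam : ∀ t ∈ Set.Ico (0 : ℝ) T,
      HasDerivWithinAt lam (-1 + lam t * (h t) ^ 2) (Set.Ico 0 T) t)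
    (hh : ∀ t ∈ Set.Ico (0 : ℝ) T,
      HasDerivWithinAt h (h t / lam t - (3 / 2) * (h t) ^ 3) (Set.Ico 0 T) t)
    (hf : ∀ t ∈ Set.Ico (0 : ℝ) T,
      HasDerivWithinAt f ((1 / 2) * (h t) ^ 2 * f t) (Set.Ico 0 T) t) :
    (∀ t ∈ Set.Ico (0 : ℝ) T,
      1 / 2 - lam t * (h t) ^ 2
        = (1 / 2 - lam 0 * (h 0) ^ 2)
            * Real.exp (-2 * ∫ s in (0 : ℝ)..t, (h s) ^ 2)) ∧
    (∀ t ∈ Set.Ico (0 : ℝ) T,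
      (0 < 1 / 2 - lam 0 * (h 0) ^ 2 → 0 < 1 / 2 - lam t * (h t) ^ 2) ∧
      (1 / 2 - lam 0 * (h 0) ^ 2 = 0 → 1 / 2 - lam t * (h t) ^ 2 = 0) ∧
      (1 / 2 - lam 0 * (h 0) ^ 2 < 0 → 1 / 2 - lam t * (h t) ^ 2 < 0)) ∧
    ((0 < lam 0 * (h 0) ^ 2 ∧ lam 0 * (h 0) ^ 2 < 1 / 2) →
      (∀ t₁ ∈ Set.Ico (0 : ℝ) T, ∀ t₂ ∈ Set.Ico (0 : ℝ) T, t₁ ≤ t₂ →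
        lam t₁ * (h t₁) ^ 2 ≤ lam t₂ * (h t₂) ^ 2) ∧
      (∀ t ∈ Set.Ico (0 : ℝ) T,
        lam 0 * (h 0) ^ 2 ≤ lam t * (h t) ^ 2 ∧ lam t * (h t) ^ 2 < 1 / 2)) := by
  set u : ℝ → ℝ := fun t => lam t * (h t) ^ 2 with hu_def
  set G : ℝ → ℝ := fun t => ∫ s in (0 : ℝ)..t, (h s) ^ 2 with hG_def
  -- continuity of h² on [0, T)
  have hconth : ContinuousOn (fun s => (h s) ^ 2) (Set.Ico 0 T) := by
    intro x hx
    exact ((hh x hx).continuousWithinAt.pow 2)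
  have hcontlam : ContinuousOn lam (Set.Ico 0 T) := fun x hx =>
    (hlam x hx).continuousWithinAt
  have hcontu : ContinuousOn u (Set.Ico 0 T) := hcontlam.mul hconth
  -- integrability on subintervals
  have hint : ∀ a ∈ Set.Ico (0:ℝ) T, ∀ b ∈ Set.Ico (0:ℝ) T,
      IntervalIntegrable (fun s => (h s) ^ 2) MeasureTheory.volume a b := by
    intro a ha b hb
    apply ContinuousOn.intervalIntegrable
    apply hconth.mono
    intro y hy
    rcases hy with ⟨h1, h2⟩
    constructor
    · exact le_trans (le_min ha.1 hb.1) h1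
    · exact lt_of_le_of_lt h2 (max_lt ha.2 hb.2)
  -- the key constancy statement
  have key : ∀ t ∈ Set.Ico (0:ℝ) T,
      (1/2 - u t) * Real.exp (2 * G t) = (1/2 - u 0) := by
    intro t ht
    have h0T : (0:ℝ) < T := lt_of_le_of_lt ht.1 ht.2
    have hsub : Set.Icc (0:ℝ) t ⊆ Set.Ico 0 T := fun y hy =>
      ⟨hy.1, lt_of_le_of_lt hy.2 ht.2⟩
    -- continuity of G on [0, t]
    have hGcont : ContinuousOn G (Set.Icc 0 t) := by
      have : Set.uIcc (0:ℝ) t = Set.Icc 0 t := Set.uIcc_of_le ht.1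
      rw [← this]
      apply intervalIntegral.continuousOn_primitive_interval
      rw [this]
      exact ((hconth.mono hsub).integrableOn_compact isCompact_Icc)
    have hFcont : ContinuousOn (fun x => (1/2 - u x) * Real.exp (2 * G x))
        (Set.Icc 0 t) := by
      apply ContinuousOn.mul
      · exact (continuousOn_const.sub (hcontu.mono hsub))
      · exact (Real.continuous_exp.comp_continuousOn (continuousOn_const.mul hGcont))
    have hderiv : ∀ x ∈ Set.Ico (0:ℝ) t,
        HasDerivWithinAt (fun x => (1/2 - u x) * Real.exp (2 * G x)) 0 (Set.Ici x) x := by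
      intro x hx
      have hxT : x ∈ Set.Ico (0:ℝ) T := ⟨hx.1, lt_trans hx.2 ht.2⟩
      have hlamne : lam x ≠ 0 := (hpos x hxT).ne'
      -- Ico 0 T is a neighborhood of x within Ici x
      have hmem : Set.Ico (0:ℝ) T ∈ nhdsWithin x (Set.Ici x) := by
        rw [mem_nhdsWithin]
        exact ⟨Set.Iio T, isOpen_Iio, hxT.2, fun y ⟨hy1, hy2⟩ =>
          ⟨le_trans hxT.1 hy2, hy1⟩⟩
      -- derivative of u within Ici x
      have hu' : HasDerivWithinAt u (2 * (h x) ^ 2 * (1/2 - u x)) (Set.Ici x) x := by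
        have := HasDerivWithinAt.mono_of_mem_nhdsWithin ((hlam x hxT).mul ((hh x hxT).pow 2)) hmem
        refine this.congr_deriv ?_
        have hhh : (h x) ^ (2 - 1) = h x := by norm_num
        simp only [hu_def, hhh, Pi.pow_apply]
        field_simp
        ring
      -- derivative of G within Ici x
      have hG' : HasDerivWithinAt G ((h x) ^ 2) (Set.Ici x) x := by
        apply intervalIntegral.integral_hasDerivWithinAt_right
          (hint 0 ⟨le_refl 0, h0T⟩ x hxT) (t := Set.Ioi x)
        · refine ⟨Set.Ioo x T, ?_, ?_⟩
          · exact Ioo_mem_nhdsGT_of_mem ⟨le_refl x, hxT.2⟩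
          · exact ((hconth.mono (fun y hy => ⟨le_trans hxT.1 (le_of_lt hy.1), hy.2⟩)).aestronglyMeasurable
              measurableSet_Ioo)
        · exact (hconth x hxT).mono_of_mem_nhdsWithin
            (by rw [mem_nhdsWithin]
                exact ⟨Set.Iio T, isOpen_Iio, hxT.2, fun y ⟨hy1, hy2⟩ =>
                  ⟨le_trans hxT.1 (le_of_lt hy2), hy1⟩⟩)
      have : HasDerivWithinAt (fun x => (1/2 - u x) * Real.exp (2 * G x))
          ((0 - 2 * (h x) ^ 2 * (1/2 - u x)) * Real.exp (2 * G x)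
            + (1/2 - u x) * (Real.exp (2 * G x) * (2 * (h x) ^ 2))) (Set.Ici x) x := by
        exact ((hasDerivWithinAt_const x _ (1/2 : ℝ)).sub hu').mul
          (((hG'.const_mul 2)).exp)
      convert this using 1
      ring
    have := constant_of_has_deriv_right_zero hFcont hderiv t ⟨ht.1, le_refl t⟩
    have hG0 : G 0 = 0 := intervalIntegral.integral_same
    rw [hG0] at this
    simpa using this
  -- main identity
  have main : ∀ t ∈ Set.Ico (0:ℝ) T,
      1/2 - u t = (1/2 - u 0) * Real.exp (-2 * G t) := by
    intro t ht
    have hk := key t ht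
    have he : Real.exp (2 * G t) ≠ 0 := (Real.exp_pos _).ne'
    have : Real.exp (-2 * G t) = (Real.exp (2 * G t))⁻¹ := by
      rw [← Real.exp_neg]; ring_nf
    rw [this, ← hk]
    field_simp
  refine ⟨main, ?_, ?_⟩
  · intro t ht
    have hm := main t ht
    have he : 0 < Real.exp (-2 * G t) := Real.exp_pos _
    refine ⟨fun h0 => ?_, fun h0 => ?_, fun h0 => ?_⟩
    · rw [hm]; exact mul_pos h0 he
    · rw [hm, h0, zero_mul]
    · rw [hm]; exact mul_neg_of_neg_of_pos h0 he
  · rintro ⟨hu0pos, hu0lt⟩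
    have hc : 0 < 1/2 - u 0 := by simp only [hu_def]; linarith
    -- G is monotone on Ico 0 T
    have hGmono : ∀ t₁ ∈ Set.Ico (0:ℝ) T, ∀ t₂ ∈ Set.Ico (0:ℝ) T, t₁ ≤ t₂ →
        G t₁ ≤ G t₂ := by
      intro t₁ ht₁ t₂ ht₂ hle
      have h0 : (0:ℝ) ∈ Set.Ico (0:ℝ) T := ⟨le_refl 0, lt_of_le_of_lt ht₁.1 ht₁.2⟩
      have hadd : G t₁ + ∫ s in t₁..t₂, (h s) ^ 2 = G t₂ :=
        intervalIntegral.integral_add_adjacent_intervals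
          (hint 0 h0 t₁ ht₁) (hint t₁ ht₁ t₂ ht₂)
      have hnn : 0 ≤ ∫ s in t₁..t₂, (h s) ^ 2 :=
        intervalIntegral.integral_nonneg hle (fun s _ => sq_nonneg _)
      linarith
    have humono : ∀ t₁ ∈ Set.Ico (0:ℝ) T, ∀ t₂ ∈ Set.Ico (0:ℝ) T, t₁ ≤ t₂ →
        u t₁ ≤ u t₂ := by
      intro t₁ ht₁ t₂ ht₂ hle
      have hm1 := main t₁ ht₁
      have hm2 := main t₂ ht₂
      have hGle := hGmono t₁ ht₁ t₂ ht₂ hle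
      have hexp : Real.exp (-2 * G t₂) ≤ Real.exp (-2 * G t₁) :=
        Real.exp_le_exp.2 (by linarith)
      nlinarith [Real.exp_pos (-2 * G t₁), Real.exp_pos (-2 * G t₂)]
    refine ⟨humono, fun t ht => ?_⟩
    have h0 : (0:ℝ) ∈ Set.Ico (0:ℝ) T := ⟨le_refl 0, lt_of_le_of_lt ht.1 ht.2⟩
    refine ⟨humono 0 h0 t ht ht.1, ?_⟩
    have hm : (1:ℝ)/2 - lam t * (h t) ^ 2
        = (1/2 - lam 0 * (h 0) ^ 2) * Real.exp (-2 * G t) := main t ht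
    nlinarith [Real.exp_pos (-2 * G t), hm]
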